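/- Let F be an algebraically closed field, V an F-vector space, and T₁,…,T_m pairwise commuting locally finite linear operators on V. For λ = (λ₁,…,λ_m) ∈ F^m let V(λ) = {v ∈ V : for each i ∈ {1,…,m} there is N ∈ ℕ with (Tᵢ − λᵢ)^N(v) = 0} be the joint generalized eigenspace. Then V is the internal direct sum V = ⊕_{λ∈F^m} V(λ). -/

import Mathlib

open Function Set

section Aux

variable {F V : Type*} [Field F] [AddCommGroup V] [Module F V]

/-- The span of the orbit of `U` under all powers of `S`. -/
noncomputable def extendSub (S : Module.End F V) (U : Submodule F V) : Submodule F V :=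
  Submodule.span F (⋃ n : ℕ, (S ^ n) '' U)

lemma le_extendSub (S : Module.End F V) (U : Submodule F V) : U ≤ extendSub S U := by
  intro x hx
  apply Submodule.subset_span
  exact Set.mem_iUnion.2 ⟨0, ⟨x, hx, by simp⟩⟩

lemma extendSub_mapsTo (S : Module.End F V) (U : Submodule F V) :
    MapsTo S (extendSub S U) (extendSub S U) := by
  intro x hx
  have : Submodule.map S (extendSub S U) ≤ extendSub S U := by
    rw [extendSub, Submodule.map_span, Submodule.span_le]
    rintro _ ⟨_, hy, rfl⟩
    obtain ⟨n, u, hu, rfl⟩ := by simpa using hy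
    apply Submodule.subset_span
    refine Set.mem_iUnion.2 ⟨n + 1, ⟨u, hu, ?_⟩⟩
    simp [pow_succ']
  exact this ⟨x, hx, rfl⟩

lemma extendSub_mapsTo_of_comm {S T : Module.End F V} (h : Commute S T) (U : Submodule F V)
    (hU : MapsTo T U U) : MapsTo T (extendSub S U) (extendSub S U) := by
  intro x hx
  have : Submodule.map T (extendSub S U) ≤ extendSub S U := by
    rw [extendSub, Submodule.map_span, Submodule.span_le]
    rintro _ ⟨_, hy, rfl⟩
    obtain ⟨n, u, hu, rfl⟩ := by simpa using hy
    apply Submodule.subset_span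
    refine Set.mem_iUnion.2 ⟨n, ⟨T u, hU hu, ?_⟩⟩
    have : S ^ n * T = T * S ^ n := (h.pow_left n).eq
    calc (S ^ n) (T u) = (S ^ n * T) u := rfl
      _ = (T * S ^ n) u := by rw [this]
      _ = T ((S ^ n) u) := rfl
  exact this ⟨x, hx, rfl⟩

lemma extendSub_finiteDimensional (S : Module.End F V) (U : Submodule F V)
    [FiniteDimensional F U]
    (hlf : ∀ v : V, FiniteDimensional F
      (Submodule.span F (Set.range fun n : ℕ => (S ^ n) v))) :
    FiniteDimensional F (extendSub S U) := by
  obtain ⟨s, hs⟩ : U.FG := (Submodule.fg_iff_finiteDimensional U).2 ‹_›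
  have hle : extendSub S U ≤
      s.sup (fun b => Submodule.span F (Set.range fun n : ℕ => (S ^ n) b)) := by
    rw [extendSub, Submodule.span_le]
    rintro _ hy
    obtain ⟨n, u, hu, rfl⟩ := by simpa using hy
    have hu' : u ∈ Submodule.span F (s : Set V) := by rw [hs]; exact hu
    have : (S ^ n) u ∈ Submodule.map (S ^ n) (Submodule.span F (s : Set V)) :=
      ⟨u, hu', rfl⟩
    rw [Submodule.map_span] at this
    refine Submodule.span_le.2 ?_ this
    rintro _ ⟨b, hb, rfl⟩
    have hb' : (S ^ n) b ∈ Submodule.span F (Set.range fun n : ℕ => (S ^ n) b) :=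
      Submodule.subset_span ⟨n, rfl⟩
    exact Finset.le_sup (f := fun b => Submodule.span F (Set.range fun n : ℕ => (S ^ n) b))
      hb hb'
  haveI : ∀ b : V, FiniteDimensional F
      (Submodule.span F (Set.range fun n : ℕ => (S ^ n) b)) := hlf
  haveI := Submodule.finiteDimensional_finset_sup s
    (fun b => Submodule.span F (Set.range fun n : ℕ => (S ^ n) b))
  exact Submodule.finiteDimensional_of_le hle

end Aux

section Chain

variable {F V : Type*} [Field F] [AddCommGroup V] [Module F V]

/-- An increasing chain of submodules, starting from `span {v}` and successively closing up
under `T 0`, `T 1`, …. -/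
noncomputable def chainSub {m : ℕ} (T : Fin m → Module.End F V) (v : V) : ℕ → Submodule F V
  | 0 => Submodule.span F {v}
  | (k+1) => if h : k < m then extendSub (T ⟨k, h⟩) (chainSub T v k) else chainSub T v k

lemma chainSub_finiteDimensional {m : ℕ} (T : Fin m → Module.End F V) (v : V)
    (hlf : ∀ i, ∀ w : V, FiniteDimensional F
      (Submodule.span F (Set.range fun n : ℕ => ((T i) ^ n) w))) (k : ℕ) :
    FiniteDimensional F (chainSub T v k) := by
  induction k with
  | zero =>
    exact FiniteDimensional.span_of_finite F (Set.finite_singleton v)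
  | succ k ih =>
    rw [chainSub]
    by_cases h : k < m
    · rw [dif_pos h]; exact extendSub_finiteDimensional _ _ (hlf _)
    · rw [dif_neg h]; exact ih

lemma mem_chainSub {m : ℕ} (T : Fin m → Module.End F V) (v : V) (k : ℕ) :
    v ∈ chainSub T v k := by
  induction k with
  | zero => exact Submodule.mem_span_singleton_self v
  | succ k ih =>
    rw [chainSub]
    split
    · exact le_extendSub _ _ ih
    · exact ih

lemma chainSub_mapsTo {m : ℕ} (T : Fin m → Module.End F V) (v : V)
    (hcomm : ∀ i j, Commute (T i) (T j)) (k : ℕ) (j : Fin m) (hj : (j : ℕ) < k) :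
    MapsTo (T j) (chainSub T v k) (chainSub T v k) := by
  induction k with
  | zero => exact absurd hj (Nat.not_lt_zero _)
  | succ k ih =>
    rw [chainSub]
    split
    · rename_i h
      rcases Nat.lt_succ_iff_lt_or_eq.mp hj with hj' | hj'
      · exact extendSub_mapsTo_of_comm (hcomm _ _) _ (ih hj')
      · have : j = ⟨k, h⟩ := Fin.ext hj'
        rw [this]
        exact extendSub_mapsTo _ _
    · rename_i h
      rcases Nat.lt_succ_iff_lt_or_eq.mp hj with hj' | hj'
      · exact ih hj'
      · exact absurd (hj' ▸ j.isLt) h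

end Chain

/-- If `T₁,…,T_m` are pairwise commuting locally finite linear operators
on a vector space `V` over an algebraically closed field `F`, then `V` is the internal
direct sum of the joint generalized eigenspaces
`V(λ) = {v | ∀ i, ∃ N, (Tᵢ − λᵢ)^N v = 0}`, `λ ∈ F^m`. -/
theorem jointGeneralizedEigenspace_isInternal
    {F : Type*} [Field F] [IsAlgClosed F]
    {V : Type*} [AddCommGroup V] [Module F V]
    (m : ℕ) [DecidableEq (Fin m → F)] (T : Fin m → Module.End F V)
    (hcomm : ∀ i j, Commute (T i) (T j))
    (hlf : ∀ i, ∀ v : V, FiniteDimensional F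
      (Submodule.span F (Set.range fun n : ℕ => ((T i) ^ n) v))) :
    DirectSum.IsInternal (fun lam : Fin m → F =>
      ⨅ i, ⨆ N : ℕ, LinearMap.ker ((T i - lam i • (1 : Module.End F V)) ^ N)) := by
  have key : (fun lam : Fin m → F =>
      ⨅ i, ⨆ N : ℕ, LinearMap.ker ((T i - lam i • (1 : Module.End F V)) ^ N)) =
      fun lam : Fin m → F => ⨅ i, (T i).maxGenEigenspace (lam i) := by
    funext lam
    refine iInf_congr fun i => ?_
    rw [← Module.End.iSup_genEigenspace_eq]
    exact iSup_congr fun N => Module.End.genEigenspace_nat.symm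
  rw [key, DirectSum.isInternal_submodule_iff_iSupIndep_and_iSup_eq_top]
  constructor
  · exact Module.End.independent_iInf_maxGenEigenspace_of_forall_mapsTo T
      fun i j φ => Module.End.mapsTo_maxGenEigenspace_of_comm (hcomm j i) φ
  · rw [eq_top_iff]
    rintro v -
    set W := chainSub T v m with hWdef
    haveI : FiniteDimensional F W := chainSub_finiteDimensional T v hlf m
    have hvW : v ∈ W := mem_chainSub T v m
    have hmaps : ∀ i : Fin m, MapsTo (T i) W W :=
      fun i => chainSub_mapsTo T v hcomm m i i.isLt
    set g : Fin m → Module.End F W := fun i => (T i).restrict (hmaps i) with hgdef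
    have htop : ⨆ χ : Fin m → F, ⨅ i, (g i).maxGenEigenspace (χ i) = ⊤ :=
      Module.End.iSup_iInf_maxGenEigenspace_eq_top_of_iSup_maxGenEigenspace_eq_top_of_commute g
        (fun i j _ => LinearMap.restrict_commute (hcomm i j) _ _)
        (fun i => Module.End.iSup_maxGenEigenspace_eq_top _)
    have hv' : (⟨v, hvW⟩ : W) ∈ ⨆ χ : Fin m → F, ⨅ i, (g i).maxGenEigenspace (χ i) := by
      rw [htop]; trivial
    have hv'' : v ∈ Submodule.map W.subtype
        (⨆ χ : Fin m → F, ⨅ i, (g i).maxGenEigenspace (χ i)) :=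
      ⟨⟨v, hvW⟩, hv', rfl⟩
    rw [Submodule.map_iSup] at hv''
    have hle : (⨆ χ : Fin m → F,
        Submodule.map W.subtype (⨅ i, (g i).maxGenEigenspace (χ i))) ≤
        ⨆ χ : Fin m → F, ⨅ i, (T i).maxGenEigenspace (χ i) := by
      refine iSup_mono fun χ => ?_
      rw [← Submodule.inf_iInf_maxGenEigenspace_of_forall_mapsTo T W hmaps]
      exact inf_le_right
    exact hle hv''
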